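/- arXiv:2202.10909 — 2 statements merged into one kernel-verified Lean document; each statement's English description precedes it below -/
import Mathlib

section
/- For every prime p, the p-adic integral of 1/max(1,|b|_p)² over b ∈ ℚ_p equals 1 + 1/p. -/
open MeasureTheory Set ENNReal

section AuxPadic

variable (p : ℕ) [Fact p.Prime]

lemma exists_repr (y : ℚ_[p]) (hy : ‖y‖ ≤ 1) :
    ∃ j : ℕ, j < p ∧ ‖y - (j : ℚ_[p])‖ ≤ (p:ℝ)⁻¹ := by
  set z : ℤ_[p] := ⟨y, hy⟩
  refine ⟨z.zmodRepr, z.zmodRepr_lt_p, ?_⟩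
  have h1 : ‖z - (z.zmodRepr : ℤ_[p])‖ < 1 := by
    have := z.sub_zmodRepr_mem
    rwa [IsLocalRing.mem_maximalIdeal, PadicInt.mem_nonunits] at this
  have h2 : ((z - (z.zmodRepr : ℤ_[p]) : ℤ_[p]) : ℚ_[p]) = y - (z.zmodRepr : ℚ_[p]) := by
    rw [PadicInt.coe_sub, PadicInt.coe_natCast]
  have h3 : ‖y - (z.zmodRepr : ℚ_[p])‖ < 1 := by
    rw [← h2, ← PadicInt.norm_def]; exact h1
  have := (Padic.norm_le_pow_iff_norm_lt_pow_add_one (y - (z.zmodRepr : ℚ_[p])) (-1)).2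
    (by simpa using h3)
  simpa using this

/-- norm-1 of integer differences -/
lemma norm_nat_diff {j k : ℕ} (hj : j < p) (hk : k < p) (hne : j ≠ k) :
    ‖(j : ℚ_[p]) - (k : ℚ_[p])‖ = 1 := by
  have hcast : (j : ℚ_[p]) - (k : ℚ_[p]) = (((j : ℤ) - (k : ℤ) : ℤ) : ℚ_[p]) := by push_cast; ring
  rw [hcast]
  have hle : ‖(((j:ℤ) - k : ℤ) : ℚ_[p])‖ ≤ 1 := Padic.norm_int_le_one _
  have hnd : ¬ ((p : ℤ) ∣ (j : ℤ) - k) := by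
    intro hdvd
    have : ((j:ℤ) - k) = 0 := by
      refine Int.eq_zero_of_abs_lt_dvd hdvd ?_
      rw [abs_sub_lt_iff]
      omega
    omega
  have := (Padic.norm_intCast_lt_one_iff (k := (j:ℤ) - k)).not.2 hnd
  push_neg at this
  linarith

def Bp (n : ℕ) : Set ℚ_[p] := {x : ℚ_[p] | ‖x‖ ≤ (p:ℝ)^n}

lemma measurable_Bp (n : ℕ) [MeasurableSpace ℚ_[p]] [BorelSpace ℚ_[p]] :
    MeasurableSet (Bp p n) :=
  measurableSet_le measurable_norm measurable_const

lemma ball_split (n : ℕ) :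
    Bp p (n+1) = ⋃ j ∈ Finset.range p,
      (fun x => -((j : ℚ_[p]) * ((p:ℚ_[p])^(n+1))⁻¹) + x) ⁻¹' Bp p n := by
  have hp1 : (1:ℝ) < p := by exact_mod_cast (Fact.out : p.Prime).one_lt
  have hp0 : (0:ℝ) < p := by linarith
  have hpq : (p:ℚ_[p]) ≠ 0 := Nat.cast_ne_zero.2 (Fact.out : p.Prime).pos.ne'
  have hnormpow : ∀ m : ℕ, ‖(p:ℚ_[p])^m‖ = ((p:ℝ)^m)⁻¹ := by
    intro m; rw [norm_pow, Padic.norm_p, inv_pow]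
  ext x
  simp only [Bp, mem_setOf_eq, mem_iUnion, Finset.mem_range, mem_preimage]
  constructor
  · intro hx
    set y := x * (p:ℚ_[p])^(n+1) with hy
    have hynorm : ‖y‖ ≤ 1 := by
      rw [hy, norm_mul, hnormpow]
      calc ‖x‖ * ((p:ℝ)^(n+1))⁻¹ ≤ (p:ℝ)^(n+1) * ((p:ℝ)^(n+1))⁻¹ := by
            apply mul_le_mul_of_nonneg_right hx; positivity
        _ = 1 := mul_inv_cancel₀ (by positivity)
    obtain ⟨j, hj, hjy⟩ := exists_repr p y hynorm
    refine ⟨j, hj, ?_⟩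
    have hxe : -((j : ℚ_[p]) * ((p:ℚ_[p])^(n+1))⁻¹) + x = (y - j) * ((p:ℚ_[p])^(n+1))⁻¹ := by
      rw [hy]; field_simp; ring
    rw [hxe, norm_mul, norm_inv, hnormpow, inv_inv]
    calc ‖y - (j:ℚ_[p])‖ * (p:ℝ)^(n+1) ≤ (p:ℝ)⁻¹ * (p:ℝ)^(n+1) := by
          apply mul_le_mul_of_nonneg_right hjy; positivity
      _ = (p:ℝ)^n := by field_simp; ring
  · rintro ⟨j, hj, hjx⟩
    have h1 : ‖(j : ℚ_[p]) * ((p:ℚ_[p])^(n+1))⁻¹‖ ≤ (p:ℝ)^(n+1) := by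
      rw [norm_mul, norm_inv, hnormpow, inv_inv]
      have : ‖(j : ℚ_[p])‖ ≤ 1 := by
        have : ‖((j : ℤ) : ℚ_[p])‖ ≤ 1 := Padic.norm_int_le_one _
        simpa using this
      nlinarith [pow_pos hp0 (n+1)]
    have hxe : x = (j : ℚ_[p]) * ((p:ℚ_[p])^(n+1))⁻¹ +
        (-((j : ℚ_[p]) * ((p:ℚ_[p])^(n+1))⁻¹) + x) := by ring
    calc ‖x‖ = ‖(j : ℚ_[p]) * ((p:ℚ_[p])^(n+1))⁻¹ +
          (-((j : ℚ_[p]) * ((p:ℚ_[p])^(n+1))⁻¹) + x)‖ := by rw [← hxe]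
      _ ≤ max ‖(j : ℚ_[p]) * ((p:ℚ_[p])^(n+1))⁻¹‖
          ‖-((j : ℚ_[p]) * ((p:ℚ_[p])^(n+1))⁻¹) + x‖ := Padic.nonarchimedean _ _
      _ ≤ (p:ℝ)^(n+1) := by
          apply max_le h1
          calc ‖-((j : ℚ_[p]) * ((p:ℚ_[p])^(n+1))⁻¹) + x‖ ≤ (p:ℝ)^n := hjx
            _ ≤ (p:ℝ)^(n+1) := pow_le_pow_right₀ (le_of_lt hp1) (by omega)

open scoped ENNReal in
lemma measure_Bp [MeasurableSpace ℚ_[p]] [BorelSpace ℚ_[p]] (μ : Measure ℚ_[p])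
    [μ.IsAddHaarMeasure] (hμ : μ {x : ℚ_[p] | ‖x‖ ≤ 1} = 1) (n : ℕ) :
    μ (Bp p n) = (p : ℝ≥0∞)^n := by
  have hp1 : (1:ℝ) < p := by exact_mod_cast (Fact.out : p.Prime).one_lt
  have hp0 : (0:ℝ) < p := by linarith
  induction n with
  | zero => simpa [Bp] using hμ
  | succ n ih =>
    rw [ball_split]
    rw [measure_biUnion_finset ?disj
      (fun j _ => (measurable_Bp p n).preimage (measurable_const_add _))]
    · simp only [measure_preimage_add, ih, Finset.sum_const, Finset.card_range, nsmul_eq_mul]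
      ring
    case disj =>
      intro j hj k hk hne
      simp only [Finset.coe_range, mem_Iio] at hj hk
      apply Set.disjoint_left.2
      intro x hxj hxk
      simp only [mem_preimage, Bp, mem_setOf_eq] at hxj hxk
      set c := fun m : ℕ => (m : ℚ_[p]) * ((p:ℚ_[p])^(n+1))⁻¹ with hc
      have key : ‖c j - c k‖ ≤ (p:ℝ)^n := by
        have : c j - c k = (-(c k) + x) + (-((-(c j)) + x)) := by ring
        calc ‖c j - c k‖ = ‖(-(c k) + x) + (-((-(c j)) + x))‖ := by rw [← this]
          _ ≤ max ‖(-(c k) + x)‖ ‖(-((-(c j)) + x))‖ := Padic.nonarchimedean _ _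
          _ ≤ (p:ℝ)^n := by rw [norm_neg]; exact max_le hxk hxj
      have hnorm : ‖c j - c k‖ = (p:ℝ)^(n+1) := by
        have : c j - c k = ((j:ℚ_[p]) - k) * ((p:ℚ_[p])^(n+1))⁻¹ := by rw [hc]; ring
        rw [this, norm_mul, norm_nat_diff p hj hk hne, norm_inv, norm_pow,
          Padic.norm_p, inv_pow, inv_inv, one_mul]
      rw [hnorm] at key
      exact absurd key (not_le.2 (pow_lt_pow_right₀ hp1 (Nat.lt_succ_self n)))


lemma norm_annulus {n : ℕ} {x : ℚ_[p]} (hx : x ∈ Bp p (n+1) \ Bp p n) :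
    ‖x‖ = (p:ℝ)^(n+1) := by
  have hp1 : (1:ℝ) < p := by exact_mod_cast (Fact.out : p.Prime).one_lt
  obtain ⟨h1, h2⟩ := hx
  simp only [Bp, mem_setOf_eq, not_le] at h1 h2
  have hx0 : x ≠ 0 := by
    rintro rfl
    simp only [norm_zero] at h2
    exact absurd h2 (not_lt.2 (by positivity))
  rw [Padic.norm_eq_zpow_neg_valuation hx0] at h1 h2 ⊢
  have e1 : (p:ℝ)^(n:ℤ) < (p:ℝ)^(-x.valuation) := by
    rw [zpow_natCast]; exact h2
  have e2 : (p:ℝ)^(-x.valuation) ≤ (p:ℝ)^((n+1 : ℕ) :ℤ) := by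
    rw [zpow_natCast]; exact h1
  have l1 := (zpow_lt_zpow_iff_right₀ hp1).1 e1
  have l2 := (zpow_le_zpow_iff_right₀ hp1).1 e2
  have : -x.valuation = ((n+1 : ℕ) : ℤ) := by push_cast at l1 l2 ⊢; omega
  rw [this, zpow_natCast]
end AuxPadic

/-- For every prime `p`, the `p`-adic integral of `1/max(1,|b|_p)²` over `b ∈ ℚ_p`,
with respect to the Haar measure giving `ℤ_p` measure `1`, equals `1 + 1/p`. -/
theorem stmt_1 (p : ℕ) [Fact p.Prime] [MeasurableSpace ℚ_[p]] [BorelSpace ℚ_[p]]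
    (μ : Measure ℚ_[p]) [μ.IsAddHaarMeasure]
    (hμ : μ {x : ℚ_[p] | ‖x‖ ≤ 1} = 1) :
    ∫ b : ℚ_[p], 1 / (max 1 ‖b‖) ^ 2 ∂μ = 1 + 1 / (p : ℝ) := by
  have hp1 : (1:ℝ) < p := by exact_mod_cast (Fact.out : p.Prime).one_lt
  have hp0 : (0:ℝ) < p := by linarith
  have hpne : (p:ℝ≥0∞) ≠ 0 := by exact_mod_cast hp0.ne' -- maybe fix
  have hpnet : (p:ℝ≥0∞) ≠ ∞ := natCast_ne_top p
  set q : ℝ≥0∞ := (p:ℝ≥0∞)⁻¹ with hq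
  have hq0 : q ≠ 0 := ENNReal.inv_ne_zero.2 hpnet
  have hqt : q ≠ ∞ := ENNReal.inv_ne_top.2 hpne
  have hq1 : q < 1 := by
    rw [hq, ENNReal.inv_lt_one]
    exact_mod_cast (Fact.out : p.Prime).one_lt
  have hqr : q * (p:ℝ≥0∞) = 1 := ENNReal.inv_mul_cancel hpne hpnet
  set f : ℚ_[p] → ℝ := fun b => 1 / (max 1 ‖b‖)^2 with hf
  have hfnn : ∀ b, 0 ≤ f b := fun b => by positivity
  have hcont : Continuous f := by
    apply Continuous.div continuous_const ((continuous_const.max continuous_norm).pow 2)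
    intro b
    have : (1:ℝ) ≤ max 1 ‖b‖ := le_max_left _ _
    exact pow_ne_zero _ (by linarith)
  set A : ℕ → Set ℚ_[p] := disjointed (Bp p) with hA
  have hBmono : Monotone (Bp p) := fun m n hmn x hx =>
    le_trans hx (pow_le_pow_right₀ hp1.le hmn)
  have hAmeas : ∀ n, MeasurableSet (A n) :=
    MeasurableSet.disjointed (fun i => measurable_Bp p i)
  have hAdisj : Pairwise (Function.onFun Disjoint A) := disjoint_disjointed _
  have hAcover : ⋃ n, A n = univ := by
    rw [hA, iUnion_disjointed]
    ext x
    simp only [mem_iUnion, mem_univ, iff_true]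
    obtain ⟨N, hN⟩ := exists_nat_gt ‖x‖
    refine ⟨N, le_trans hN.le ?_⟩
    exact_mod_cast (Nat.lt_pow_self (n := N) (Fact.out : p.Prime).one_lt).le
  have hA0 : A 0 = Bp p 0 := disjointed_zero _
  have hAsucc : ∀ n, A (n+1) = Bp p (n+1) \ Bp p n := fun n => hBmono.disjointed_succ (not_isMax n)
  -- measures of annuli
  have hμA0 : μ (A 0) = 1 := by
    rw [hA0]
    simpa [Bp] using hμ
  have hμAn : ∀ n, μ (A (n+1)) = (p:ℝ≥0∞)^(n+1) - (p:ℝ≥0∞)^n := by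
    intro n
    rw [hAsucc n, measure_diff (hBmono (Nat.le_succ n)) (measurable_Bp p n).nullMeasurableSet
      (by rw [measure_Bp p μ hμ]; exact pow_ne_top hpnet),
      measure_Bp p μ hμ, measure_Bp p μ hμ]
  -- value of integrand on annuli
  have hval0 : ∀ x ∈ A 0, ENNReal.ofReal (f x) = 1 := by
    intro x hx
    rw [hA0] at hx
    have hx1 : ‖x‖ ≤ 1 := by simpa [Bp] using hx
    simp [hf, max_eq_left hx1]
  have hvaln : ∀ n, ∀ x ∈ A (n+1), ENNReal.ofReal (f x) = q^(2*(n+1)) := by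
    intro n x hx
    rw [hAsucc n] at hx
    have hnx := norm_annulus p hx
    have h1 : (1:ℝ) ≤ (p:ℝ)^(n+1) := one_le_pow₀ hp1.le
    rw [hf]
    simp only
    have e : ((p:ℝ)^(n+1))^2 = (p:ℝ)^(2*(n+1)) := by rw [← pow_mul, mul_comm]
    rw [hnx, max_eq_right h1, one_div, e, ENNReal.ofReal_inv_of_pos (by positivity),
      ENNReal.ofReal_pow hp0.le, ENNReal.ofReal_natCast, hq, ENNReal.inv_pow]
  -- the lintegral
  have hL : ∫⁻ b, ENNReal.ofReal (f b) ∂μ = 1 + q := by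
    rw [← setLIntegral_univ, ← hAcover, lintegral_iUnion hAmeas hAdisj]
    have hterm0 : ∫⁻ x in A 0, ENNReal.ofReal (f x) ∂μ = 1 := by
      rw [setLIntegral_congr_fun (hAmeas 0) hval0, setLIntegral_const, hμA0,
        one_mul]
    have htermn : ∀ n, ∫⁻ x in A (n+1), ENNReal.ofReal (f x) ∂μ = q^(n+1) * (1 - q) := by
      intro n
      rw [setLIntegral_congr_fun (hAmeas (n+1)) (hvaln n), setLIntegral_const,
        hμAn n]
      -- q^(2(n+1)) * (p^(n+1) - p^n) = q^(n+1) * (1 - q)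
      rw [ENNReal.mul_sub (fun _ _ => pow_ne_top hqt)]
      have e1 : q^(2*(n+1)) * (p:ℝ≥0∞)^(n+1) = q^(n+1) := by
        have : q^(2*(n+1)) = q^(n+1) * q^(n+1) := by rw [two_mul, pow_add]
        rw [this, mul_assoc, ← mul_pow, hqr, one_pow, mul_one]
      have e2 : q^(2*(n+1)) * (p:ℝ≥0∞)^n = q^(n+2) := by
        have : q^(2*(n+1)) = q^(n+2) * q^n := by rw [← pow_add]; congr 1; omega
        rw [this, mul_assoc, ← mul_pow, hqr, one_pow, mul_one]
      rw [e1, e2, ENNReal.mul_sub (fun _ _ => pow_ne_top hqt), mul_one, ← pow_succ]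
    have hsplit : ∑' n : ℕ, ∫⁻ x in A n, ENNReal.ofReal (f x) ∂μ
        = (∫⁻ x in A 0, ENNReal.ofReal (f x) ∂μ)
          + ∑' n : ℕ, ∫⁻ x in A (n+1), ENNReal.ofReal (f x) ∂μ :=
      tsum_eq_zero_add' ENNReal.summable
    rw [hsplit, hterm0]
    congr 1
    have : ∑' n : ℕ, ∫⁻ x in A (n+1), ENNReal.ofReal (f x) ∂μ
        = ∑' n : ℕ, q^(n+1) * (1 - q) := by
      exact tsum_congr fun n => htermn n
    rw [this, ENNReal.tsum_mul_right, ENNReal.tsum_geometric_add_one, mul_assoc,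
      ENNReal.inv_mul_cancel (by simpa [tsub_eq_zero_iff_le] using hq1.not_ge) (by simp),
      mul_one]
  -- conclude
  rw [integral_eq_lintegral_of_nonneg_ae (ae_of_all _ hfnn) hcont.aestronglyMeasurable, hL,
    ENNReal.toReal_add one_ne_top hqt, ENNReal.toReal_one, hq, ENNReal.toReal_inv,
    ENNReal.toReal_natCast, one_div]
end

section
/- The volume V(B) of the region {(a₁,b₀,b₁,c₀,c₁) ∈ ℝ⁵ : |a₁|,|b₀|,|b₁|,|c₀|,|c₁| ≥ 1 and |a₁|·max(b₀²,b₁²)·max(c₀²,c₁²) ≤ B}, divided by 4, satisfies V(B) = 4·B·(log B)² + O(B·log B) as B → ∞. -/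
open MeasureTheory Filter Asymptotics

open MeasureTheory Filter Asymptotics Set
open scoped ENNReal

noncomputable section

namespace Stmt6


lemma lintegral_abs (f : ℝ → ℝ≥0∞) : ∫⁻ x : ℝ, f (|x|) = 2 * ∫⁻ x in Ioi (0:ℝ), f x := by
  have hemb : MeasurableEmbedding fun x : ℝ => -x :=
    (Homeomorph.neg ℝ).isClosedEmbedding.measurableEmbedding
  have h1 : ∫⁻ x in Iic (0:ℝ), f (|x|) = ∫⁻ x in Ioi (0:ℝ), f x := by
    rw [← lintegral_indicator measurableSet_Iic]
    conv_lhs => rw [← Measure.map_neg_eq_self (volume : Measure ℝ)]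
    rw [hemb.lintegral_map]
    have heq : ∀ x : ℝ, (Iic (0:ℝ)).indicator (fun y => f (|y|)) (-x)
        = (Ici (0:ℝ)).indicator (fun y => f (|y|)) x := by
      intro x
      by_cases hx : (0:ℝ) ≤ x
      · rw [indicator_of_mem (by simpa using hx), indicator_of_mem (by simpa using hx)]
        simp [abs_neg]
      · rw [indicator_of_notMem (by simpa using hx), indicator_of_notMem (by simpa using hx)]
    simp_rw [heq]
    rw [lintegral_indicator measurableSet_Ici]
    calc ∫⁻ x in Ici (0:ℝ), f (|x|) = ∫⁻ x in Ioi (0:ℝ), f (|x|) :=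
          setLIntegral_congr Ioi_ae_eq_Ici.symm
      _ = ∫⁻ x in Ioi (0:ℝ), f x :=
          setLIntegral_congr_fun measurableSet_Ioi
            (fun x hx => by rw [abs_of_pos hx])
  have h2 : ∫⁻ x in Ioi (0:ℝ), f (|x|) = ∫⁻ x in Ioi (0:ℝ), f x :=
    setLIntegral_congr_fun measurableSet_Ioi (fun x hx => by rw [abs_of_pos hx])
  rw [← lintegral_add_compl (fun x => f (|x|)) measurableSet_Iic (μ := volume), compl_Iic,
    h1, h2, two_mul]


lemma lintegral_even (h : ℝ → ℝ≥0∞) :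
    ∫⁻ v : ℝ, (if 1 ≤ |v| then h (|v|) else 0) = 2 * ∫⁻ v in Ici (1:ℝ), h v := by
  have : ∫⁻ v : ℝ, (fun x => if 1 ≤ x then h x else 0) (|v|)
      = 2 * ∫⁻ v in Ioi (0:ℝ), (if 1 ≤ v then h v else 0) :=
    lintegral_abs (fun x => if 1 ≤ x then h x else 0)
  rw [show (fun v : ℝ => if 1 ≤ |v| then h (|v|) else 0)
      = fun v => (fun x => if 1 ≤ x then h x else 0) (|v|) from rfl, this]
  congr 1
  rw [show (fun v : ℝ => if 1 ≤ v then h v else 0) = fun v => (Ici (1:ℝ)).indicator h v from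
    funext fun v => by by_cases hv : (1:ℝ) ≤ v <;> simp [indicator_apply, hv]]
  rw [lintegral_indicator measurableSet_Ici, Measure.restrict_restrict measurableSet_Ici]
  have hI : Ici (1:ℝ) ∩ Ioi 0 = Ici 1 := inter_eq_left.mpr fun x hx => mem_Ioi.mpr (lt_of_lt_of_le one_pos hx)
  rw [hI]

lemma vol_abs (r : ℝ) : volume {a : ℝ | 1 ≤ |a| ∧ |a| ≤ r} = ENNReal.ofReal (2*(r-1)) := by
  have hset : {a : ℝ | 1 ≤ |a| ∧ |a| ≤ r} = Icc (-r) (-1) ∪ Icc 1 r := by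
    ext a
    simp only [mem_setOf_eq, mem_union, mem_Icc]
    rcases abs_cases a with ⟨h1, h2⟩ | ⟨h1, h2⟩
    · constructor
      · rintro ⟨ha, hr⟩; right; constructor <;> linarith
      · rintro (⟨ha, hr⟩ | ⟨ha, hr⟩) <;> constructor <;> linarith
    · constructor
      · rintro ⟨ha, hr⟩; left; constructor <;> linarith
      · rintro (⟨ha, hr⟩ | ⟨ha, hr⟩) <;> constructor <;> linarith
  rw [hset, measure_union ?hd measurableSet_Icc, Real.volume_Icc, Real.volume_Icc]
  · rcases le_or_gt 1 r with hr | hr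
    · rw [← ENNReal.ofReal_add (by linarith) (by linarith)]
      ring_nf
    · rw [ENNReal.ofReal_of_nonpos (by linarith), ENNReal.ofReal_of_nonpos (by linarith),
        ENNReal.ofReal_of_nonpos (by linarith)]
      simp
  case hd =>
    rw [Set.disjoint_left]
    rintro x ⟨_, hx2⟩ ⟨hx3, _⟩
    linarith

lemma max_sq (p q : ℝ) : max (p^2) (q^2) = (max |p| |q|)^2 := by
  rcases le_total |p| |q| with h | h
  · rw [max_eq_right h, max_eq_right (by nlinarith [abs_nonneg p, abs_nonneg q, sq_abs p, sq_abs q]), sq_abs]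
  · rw [max_eq_left h, max_eq_left (by nlinarith [abs_nonneg p, abs_nonneg q, sq_abs p, sq_abs q]), sq_abs]



/-- innermost level result -/
def f1 (K u : ℝ) : ℝ := if u ≤ K then 4*(2*K^2/u - K^2/u^2 - 2*K + 1) else 0

/-- c-block level result -/
def f2 (K : ℝ) : ℝ := if 1 ≤ K then 8*(2*K^2*Real.log K - 3*K^2 + 4*K - 1) else 0

/-- antiderivative of `fun v => f2 (s/v)` -/
def Psi (s v : ℝ) : ℝ :=
  8*(-(2*s^2*Real.log s)/v + 2*s^2*(Real.log v/v) + 5*s^2/v + 4*s*Real.log v - v)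

/-- b1 level result -/
def J3 (s w : ℝ) : ℝ := if w ≤ s then 2*((w-1) * f2 (s/w) + (Psi s s - Psi s w)) else 0

/-- antiderivative for the last level -/
def Aa (s w : ℝ) : ℝ :=
  8*(4*s^2*Real.log s*Real.log w - 2*s^2*((Real.log w)^2) + 2*s^2*((Real.log s - Real.log w)/w)
    - 5*s^2/w - 8*s^2*Real.log w - 4*s*Real.log w + 12*s*w + w + 4*s*Real.log s*w
    - 4*s*(w*Real.log w))

def Vval (s : ℝ) : ℝ :=
  64*s^2*(Real.log s)^2 - 320*s^2*Real.log s - 256*s*Real.log s + 544*s^2 - 512*s - 32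

lemma f2aux_nonneg {K : ℝ} (hK : 1 ≤ K) : 0 ≤ 2*K^2*Real.log K - 3*K^2 + 4*K - 1 := by
  set g : ℝ → ℝ := fun x => 2*x^2*Real.log x - 3*x^2 + 4*x - 1 with hg
  have hderiv : ∀ x : ℝ, 0 < x → HasDerivAt g (4*x*Real.log x + 2*x - 6*x + 4) x := by
    intro x hx
    have h1 : HasDerivAt (fun x : ℝ => 2*x^2*Real.log x) (4*x*Real.log x + 2*x) x := by
      have := (((hasDerivAt_pow 2 x).const_mul (2:ℝ)).mul (Real.hasDerivAt_log hx.ne'))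
      refine this.congr_deriv ?_
      field_simp; ring
    have h2 : HasDerivAt (fun x : ℝ => 3*x^2) (6*x) x := by
      have := (hasDerivAt_pow 2 x).const_mul (3:ℝ)
      refine this.congr_deriv ?_; push_cast; ring
    have h3 : HasDerivAt (fun x : ℝ => 4*x) (4:ℝ) x := by
      have := (hasDerivAt_id' x).const_mul (4:ℝ)
      refine this.congr_deriv ?_; norm_num
    have := ((h1.sub h2).add h3).sub (hasDerivAt_const x (1:ℝ))
    refine this.congr_deriv ?_; ring
  have hmono : MonotoneOn g (Ici 1) := by
    apply monotoneOn_of_deriv_nonneg (convex_Ici 1)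
    · apply ContinuousOn.sub (ContinuousOn.add (ContinuousOn.sub ?_ (by fun_prop)) (by fun_prop))
        continuousOn_const
      exact (continuousOn_const.mul (continuousOn_pow 2)).mul
        (Real.continuousOn_log.mono fun x hx => by
          simp only [mem_compl_iff, mem_singleton_iff]
          intro h; rw [h] at hx; exact absurd hx.out (by norm_num))
    · intro x hx
      rw [interior_Ici] at hx
      exact ((hderiv x (by linarith [hx.out])).differentiableAt).differentiableWithinAt
    · intro x hx
      rw [interior_Ici] at hx
      have hx1 : (1:ℝ) < x := hx
      rw [(hderiv x (by linarith)).deriv]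
      have hx0 : (0:ℝ) < x := by linarith
      have hinv : x * (1/x) = 1 := by field_simp
      have hlog : Real.log x ≥ 1 - 1/x := by
        have := Real.log_le_sub_one_of_pos (x := 1/x) (by positivity)
        rw [Real.log_div one_ne_zero (by linarith), Real.log_one] at this
        linarith
      nlinarith [mul_le_mul_of_nonneg_left hlog (by linarith : (0:ℝ) ≤ 4*x), hinv]
  have h0 : g 1 = 0 := by norm_num [hg]
  have := hmono (self_mem_Ici) (mem_Ici.mpr hK) hK
  rw [h0] at this
  exact this

lemma f2_nonneg (K : ℝ) : 0 ≤ f2 K := by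
  unfold f2; split_ifs with h
  · have := f2aux_nonneg h; linarith
  · exact le_rfl

lemma intC1 {u K : ℝ} (hu : 1 ≤ u) (huK : u ≤ K) :
    ∫ v in u..K, 2*(K^2/v^2 - 1) = 2*(K^2/u + u - 2*K) := by
  have hder : ∀ x ∈ uIcc u K, HasDerivAt (fun v : ℝ => 2*(-(K^2)/v - v)) (2*(K^2/x^2 - 1)) x := by
    intro x hx
    rw [uIcc_of_le huK] at hx
    have hx0 : x ≠ 0 := by have := hx.1; intro h; rw [h] at this; linarith
    have := (((hasDerivAt_const x (-(K^2))).div (hasDerivAt_id' x) hx0).sub (hasDerivAt_id' x)).const_mul (2:ℝ)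
    refine this.congr_deriv ?_
    field_simp
    try ring
  rw [intervalIntegral.integral_eq_sub_of_hasDerivAt hder ?hint]
  · have hu0 : (0:ℝ) < u := by linarith
    have hK0 : (0:ℝ) < K := by linarith
    field_simp; ring
  case hint =>
    apply ContinuousOn.intervalIntegrable
    apply continuousOn_const.mul (ContinuousOn.sub ?_ continuousOn_const)
    apply continuousOn_const.div (continuousOn_pow 2)
    intro x hx
    rw [uIcc_of_le huK] at hx
    have : (0:ℝ) < x := by linarith [hx.1]
    exact pow_ne_zero _ this.ne'

lemma intC0 {K : ℝ} (hK : 1 ≤ K) :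
    ∫ v in (1:ℝ)..K, 4*(2*K^2/v - K^2/v^2 - 2*K + 1)
      = 4*(2*K^2*Real.log K - 3*K^2 + 4*K - 1) := by
  have hder : ∀ x ∈ uIcc (1:ℝ) K,
      HasDerivAt (fun v : ℝ => 4*(2*K^2*Real.log v + K^2/v + (1 - 2*K)*v))
        (4*(2*K^2/x - K^2/x^2 - 2*K + 1)) x := by
    intro x hx
    rw [uIcc_of_le hK] at hx
    have hx0 : (0:ℝ) < x := by linarith [hx.1]
    have := ((((Real.hasDerivAt_log hx0.ne').const_mul (2*K^2)).add
        ((hasDerivAt_const x (K^2)).div (hasDerivAt_id' x) hx0.ne')).add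
        ((hasDerivAt_id' x).const_mul (1 - 2*K))).const_mul (4:ℝ)
    refine this.congr_deriv ?_
    field_simp; ring
  rw [intervalIntegral.integral_eq_sub_of_hasDerivAt hder ?hint]
  · have hK0 : (0:ℝ) < K := by linarith
    simp only [Real.log_one]
    field_simp; ring
  case hint =>
    apply ContinuousOn.intervalIntegrable
    apply continuousOn_const.mul
    apply ContinuousOn.add (ContinuousOn.sub (ContinuousOn.sub ?h1 ?h2) continuousOn_const)
      continuousOn_const
    case h1 =>
      apply continuousOn_const.div continuousOn_id
      intro x hx; rw [uIcc_of_le hK] at hx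
      have h0 : (0:ℝ) < x := by linarith [hx.1]
      simpa using h0.ne'
    case h2 =>
      apply continuousOn_const.div (continuousOn_pow 2)
      intro x hx; rw [uIcc_of_le hK] at hx
      have h0 : (0:ℝ) < x := by linarith [hx.1]
      simpa using h0.ne'



lemma contOn_log {a b : ℝ} (ha : 0 < a) : ContinuousOn Real.log (Icc a b) :=
  Real.continuousOn_log.mono fun x hx => by
    simp only [mem_compl_iff, mem_singleton_iff]
    intro h; rw [h] at hx; linarith [hx.1]

lemma contOn_phi {a b s : ℝ} (ha : 0 < a) :
    ContinuousOn (fun x : ℝ =>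
      8*(2*(s/x)^2*(Real.log s - Real.log x) - 3*(s/x)^2 + 4*(s/x) - 1)) (Icc a b) := by
  have hne : ∀ x ∈ Icc a b, x ≠ 0 := fun x hx => (by linarith [hx.1] : (0:ℝ) < x).ne'
  have hdiv : ContinuousOn (fun x : ℝ => s/x) (Icc a b) :=
    continuousOn_const.div continuousOn_id hne
  have hlog : ContinuousOn Real.log (Icc a b) := contOn_log ha
  exact continuousOn_const.mul
    ((((continuousOn_const.mul (hdiv.pow 2)).mul (continuousOn_const.sub hlog)).sub
      (continuousOn_const.mul (hdiv.pow 2))).add (continuousOn_const.mul hdiv)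
      |>.sub continuousOn_const)

lemma contOn_Psi {a b s : ℝ} (ha : 0 < a) :
    ContinuousOn (fun x : ℝ => Psi s x) (Icc a b) := by
  have hne : ∀ x ∈ Icc a b, x ≠ 0 := fun x hx => (by linarith [hx.1] : (0:ℝ) < x).ne'
  have hlog : ContinuousOn Real.log (Icc a b) := contOn_log ha
  simp only [Psi]
  exact continuousOn_const.mul
    (((((continuousOn_const.div continuousOn_id hne).add
      (continuousOn_const.mul (hlog.div continuousOn_id hne))).add
      (continuousOn_const.div continuousOn_id hne)).add
      (continuousOn_const.mul hlog)).sub continuousOn_id)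

lemma intB1 {s w : ℝ} (hw : 1 ≤ w) (hws : w ≤ s) :
    ∫ v in w..s, 8*(2*(s/v)^2*(Real.log s - Real.log v) - 3*(s/v)^2 + 4*(s/v) - 1)
      = Psi s s - Psi s w := by
  have hs0 : (0:ℝ) < s := by linarith
  have hder : ∀ x ∈ uIcc w s,
      HasDerivAt (fun v => Psi s v)
        (8*(2*(s/x)^2*(Real.log s - Real.log x) - 3*(s/x)^2 + 4*(s/x) - 1)) x := by
    intro x hx
    rw [uIcc_of_le hws] at hx
    have hx0 : (0:ℝ) < x := by linarith [hx.1]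
    have hxne : x ≠ 0 := hx0.ne'
    have hsne : s ≠ 0 := hs0.ne'
    have H := (((((hasDerivAt_const x (-(2*s^2*Real.log s))).div (hasDerivAt_id' x) hxne).add
        (((Real.hasDerivAt_log hxne).div (hasDerivAt_id' x) hxne).const_mul (2*s^2))).add
        ((hasDerivAt_const x (5*s^2)).div (hasDerivAt_id' x) hxne)).add
        ((Real.hasDerivAt_log hxne).const_mul (4*s))).sub (hasDerivAt_id' x)
    have H2 := H.const_mul (8:ℝ)
    have heq : (fun v => Psi s v) = fun v : ℝ =>
        8*(-(2*s^2*Real.log s)/v + 2*s^2*(Real.log v/v) + 5*s^2/v + 4*s*Real.log v - v) := rfl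
    rw [heq]
    refine H2.congr_deriv ?_
    field_simp
    ring
  rw [intervalIntegral.integral_eq_sub_of_hasDerivAt hder ?hint]
  case hint =>
    apply ContinuousOn.intervalIntegrable
    rw [uIcc_of_le hws]
    exact contOn_phi (by linarith)

lemma intB0 {s : ℝ} (hs : 1 ≤ s) :
    ∫ x in (1:ℝ)..s,
        ((x-1)*(8*(2*(s/x)^2*(Real.log s - Real.log x) - 3*(s/x)^2 + 4*(s/x) - 1))
          + (Psi s s - Psi s x))
      = Aa s s - Aa s 1 := by
  have hs0 : (0:ℝ) < s := by linarith
  have hder : ∀ x ∈ uIcc (1:ℝ) s,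
      HasDerivAt (fun w => Aa s w)
        ((x-1)*(8*(2*(s/x)^2*(Real.log s - Real.log x) - 3*(s/x)^2 + 4*(s/x) - 1))
          + (Psi s s - Psi s x)) x := by
    intro x hx
    rw [uIcc_of_le hs] at hx
    have hx0 : (0:ℝ) < x := by linarith [hx.1]
    have hxne : x ≠ 0 := hx0.ne'
    have hsne : s ≠ 0 := hs0.ne'
    have H := ((((((((((Real.hasDerivAt_log hxne).const_mul (4*s^2*Real.log s)).sub
        (((Real.hasDerivAt_log hxne).pow 2).const_mul (2*s^2))).add
        ((((hasDerivAt_const x (Real.log s)).sub (Real.hasDerivAt_log hxne)).div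
          (hasDerivAt_id' x) hxne).const_mul (2*s^2))).sub
        ((hasDerivAt_const x (5*s^2)).div (hasDerivAt_id' x) hxne)).sub
        ((Real.hasDerivAt_log hxne).const_mul (8*s^2))).sub
        ((Real.hasDerivAt_log hxne).const_mul (4*s))).add
        ((hasDerivAt_id' x).const_mul (12*s))).add (hasDerivAt_id' x)).add
        ((hasDerivAt_id' x).const_mul (4*s*Real.log s))).sub
        (((hasDerivAt_id' x).mul (Real.hasDerivAt_log hxne)).const_mul (4*s))
    have H2 := H.const_mul (8:ℝ)
    have heq : (fun w => Aa s w) = fun w : ℝ =>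
        8*(4*s^2*Real.log s*Real.log w - 2*s^2*((Real.log w)^2)
          + 2*s^2*((Real.log s - Real.log w)/w)
          - 5*s^2/w - 8*s^2*Real.log w - 4*s*Real.log w + 12*s*w + w + 4*s*Real.log s*w
          - 4*s*(w*Real.log w)) := rfl
    rw [heq]
    refine H2.congr_deriv ?_
    simp only [Psi, Pi.sub_apply]
    field_simp
    try ring
    try exact Or.inl (by ring)
  rw [intervalIntegral.integral_eq_sub_of_hasDerivAt hder ?hint]
  case hint =>
    apply ContinuousOn.intervalIntegrable
    rw [uIcc_of_le hs]
    exact ((continuousOn_id.sub continuousOn_const).mul (contOn_phi one_pos)).add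
      (continuousOn_const.sub (contOn_Psi one_pos))

lemma two_ofReal (x : ℝ) : (2:ℝ≥0∞) * ENNReal.ofReal x = ENNReal.ofReal (2*x) := by
  rw [ENNReal.ofReal_mul (by norm_num : (0:ℝ) ≤ 2), ENNReal.ofReal_ofNat]

lemma lint_zero {s : Set ℝ} (hs : MeasurableSet s) {g : ℝ → ℝ} (h : ∀ v ∈ s, g v ≤ 0) :
    ∫⁻ v in s, ENNReal.ofReal (g v) = 0 := by
  have heq : ∫⁻ v in s, ENNReal.ofReal (g v) = ∫⁻ v in s, (0:ℝ≥0∞) :=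
    setLIntegral_congr_fun hs (fun v hv => by
      simp [ENNReal.ofReal_eq_zero.mpr (h v hv)])
  rw [heq, lintegral_zero]

lemma lint_Ioc {a b : ℝ} (hab : a ≤ b) {g : ℝ → ℝ} (hcont : ContinuousOn g (Icc a b))
    (hnn : ∀ v ∈ Ioc a b, 0 ≤ g v) :
    ∫⁻ v in Ioc a b, ENNReal.ofReal (g v) = ENNReal.ofReal (∫ v in a..b, g v) := by
  rw [intervalIntegral.integral_of_le hab]
  exact (ofReal_integral_eq_lintegral_ofReal
    (hcont.integrableOn_Icc.mono_set Ioc_subset_Icc_self)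
    ((ae_restrict_iff' measurableSet_Ioc).mpr (ae_of_all _ hnn))).symm

lemma split3 {u M : ℝ} (hu : 1 ≤ u) (huM : u ≤ M) (h : ℝ → ℝ≥0∞) :
    ∫⁻ v in Ici (1:ℝ), h v
      = (∫⁻ v in Icc 1 u, h v) + (∫⁻ v in Ioc u M, h v) + (∫⁻ v in Ioi M, h v) := by
  have hset : Ici (1:ℝ) = Icc 1 u ∪ (Ioc u M ∪ Ioi M) := by
    rw [Ioc_union_Ioi_eq_Ioi huM, Icc_union_Ioi_eq_Ici hu]
  rw [hset, lintegral_union (measurableSet_Ioc.union measurableSet_Ioi) ?d1,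
    lintegral_union measurableSet_Ioi ?d2, add_assoc]
  case d1 =>
    rw [Set.disjoint_left]
    rintro x ⟨_, hx2⟩ (⟨hx3, _⟩ | hx3)
    · linarith
    · simp only [mem_Ioi] at hx3; linarith
  case d2 =>
    rw [Set.disjoint_left]
    rintro x ⟨_, hx2⟩ hx3
    simp only [mem_Ioi] at hx3; linarith

lemma split2 {M : ℝ} (hM : 1 ≤ M) (h : ℝ → ℝ≥0∞) :
    ∫⁻ v in Ici (1:ℝ), h v = (∫⁻ v in Ioc 1 M, h v) + (∫⁻ v in Ioi M, h v) := by
  have hset : Ici (1:ℝ) = Icc 1 M ∪ Ioi M := (Icc_union_Ioi_eq_Ici hM).symm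
  rw [hset, lintegral_union measurableSet_Ioi ?d,
    setLIntegral_congr (μ := volume) (Ioc_ae_eq_Icc (a := (1:ℝ)) (b := M)).symm]
  case d =>
    rw [Set.disjoint_left]
    rintro x ⟨_, hx2⟩ hx3
    simp only [mem_Ioi] at hx3; linarith


lemma levelC1 {K u : ℝ} (hu : 1 ≤ u) (hK : 0 < K) :
    ∫⁻ v : ℝ, (if 1 ≤ |v| then ENNReal.ofReal (2*(K^2/(max u (|v|))^2 - 1)) else 0)
      = ENNReal.ofReal (f1 K u) := by
  have hu0 : (0:ℝ) < u := by linarith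
  have hstep : ∫⁻ v : ℝ, (if 1 ≤ |v| then ENNReal.ofReal (2*(K^2/(max u (|v|))^2 - 1)) else 0)
      = 2 * ∫⁻ v in Ici (1:ℝ), ENNReal.ofReal (2*(K^2/(max u v)^2 - 1)) :=
    lintegral_even (fun x => ENNReal.ofReal (2*(K^2/(max u x)^2 - 1)))
  rw [hstep]
  rcases le_or_gt u K with huK | huK
  · have hnn1 : (0:ℝ) ≤ 2*(K^2/u^2 - 1) := by
      have h2 : u^2 ≤ K^2 := by nlinarith
      have := (one_le_div (by positivity : (0:ℝ) < u^2)).mpr h2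
      linarith
    have hnn2 : (0:ℝ) ≤ 2*(K^2/u + u - 2*K) := by
      have heq : K^2/u + u - 2*K = (K-u)^2/u := by field_simp; ring
      have := div_nonneg (sq_nonneg (K-u)) hu0.le
      linarith [heq ▸ this]
    rw [split3 hu huK]
    have hp1 : ∫⁻ v in Icc 1 u, ENNReal.ofReal (2*(K^2/(max u v)^2 - 1))
        = ENNReal.ofReal ((2*(K^2/u^2 - 1)) * (u - 1)) := by
      rw [setLIntegral_congr_fun measurableSet_Icc (fun v hv => by
          rw [max_eq_left hv.2]), setLIntegral_const, Real.volume_Icc,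
        ← ENNReal.ofReal_mul hnn1]
    have hp2 : ∫⁻ v in Ioc u K, ENNReal.ofReal (2*(K^2/(max u v)^2 - 1))
        = ENNReal.ofReal (2*(K^2/u + u - 2*K)) := by
      rw [setLIntegral_congr_fun measurableSet_Ioc (fun v hv => by
          rw [max_eq_right hv.1.le]), lint_Ioc huK ?cont ?nn, intC1 hu huK]
      case cont =>
        apply continuousOn_const.mul (ContinuousOn.sub ?_ continuousOn_const)
        apply continuousOn_const.div (continuousOn_pow 2)
        intro v hv
        have : (0:ℝ) < v := by linarith [hv.1]
        exact pow_ne_zero _ this.ne'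
      case nn =>
        intro v hv
        have hv0 : (0:ℝ) < v := by linarith [hv.1]
        have h2 : v^2 ≤ K^2 := by nlinarith [hv.2]
        have := (one_le_div (by positivity : (0:ℝ) < v^2)).mpr h2
        linarith
    have hp3 : ∫⁻ v in Ioi K, ENNReal.ofReal (2*(K^2/(max u v)^2 - 1)) = 0 := by
      apply lint_zero measurableSet_Ioi
      intro v hv
      have hv' : K < v := hv
      have hmax : K < max u v := lt_max_iff.mpr (Or.inr hv')
      have hmp : (0:ℝ) < max u v := lt_trans hK hmax
      have h2 : K^2 < (max u v)^2 := by nlinarith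
      have := (div_lt_one (by positivity : (0:ℝ) < (max u v)^2)).mpr h2
      linarith
    rw [hp1, hp2, hp3, add_zero, ← ENNReal.ofReal_add (mul_nonneg hnn1 (by linarith)) hnn2,
      two_ofReal]
    rw [f1, if_pos huK]
    congr 1
    field_simp
    ring
  · have hz : ∫⁻ v in Ici (1:ℝ), ENNReal.ofReal (2*(K^2/(max u v)^2 - 1)) = 0 := by
      apply lint_zero measurableSet_Ici
      intro v hv
      have hmax : K < max u v := lt_max_iff.mpr (Or.inl huK)
      have hmp : (0:ℝ) < max u v := lt_trans hK hmax
      have h2 : K^2 < (max u v)^2 := by nlinarith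
      have := (div_lt_one (by positivity : (0:ℝ) < (max u v)^2)).mpr h2
      linarith
    rw [hz, mul_zero, f1, if_neg (not_le.mpr huK), ENNReal.ofReal_zero]

lemma levelC0 {K : ℝ} (hK : 0 < K) :
    ∫⁻ v : ℝ, (if 1 ≤ |v| then ENNReal.ofReal (f1 K (|v|)) else 0)
      = ENNReal.ofReal (f2 K) := by
  have hstep : ∫⁻ v : ℝ, (if 1 ≤ |v| then ENNReal.ofReal (f1 K (|v|)) else 0)
      = 2 * ∫⁻ v in Ici (1:ℝ), ENNReal.ofReal (f1 K v) :=
    lintegral_even (fun x => ENNReal.ofReal (f1 K x))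
  rw [hstep]
  rcases le_or_gt 1 K with h1K | h1K
  · rw [split2 h1K]
    have hp1 : ∫⁻ v in Ioc 1 K, ENNReal.ofReal (f1 K v)
        = ENNReal.ofReal (4*(2*K^2*Real.log K - 3*K^2 + 4*K - 1)) := by
      rw [setLIntegral_congr_fun measurableSet_Ioc (fun v hv => by
          rw [f1, if_pos hv.2]), lint_Ioc h1K ?cont ?nn, intC0 h1K]
      case cont =>
        have hne : ∀ v ∈ Icc (1:ℝ) K, v ≠ 0 := fun v hv => (by linarith [hv.1] : (0:ℝ) < v).ne'
        apply continuousOn_const.mul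
        exact (((continuousOn_const.div continuousOn_id hne).sub
          (continuousOn_const.div (continuousOn_pow 2) (fun v hv =>
            pow_ne_zero _ (hne v hv)))).sub continuousOn_const).add continuousOn_const
      case nn =>
        intro v hv
        have hv0 : (0:ℝ) < v := by linarith [hv.1]
        have key : 2*K^2/v - K^2/v^2 - 2*K + 1 = (K-v)*((2*K-1)*v - K)/v^2 := by
          field_simp; ring
        have h1 : 0 ≤ (K-v)*((2*K-1)*v - K) := by
          apply mul_nonneg (by linarith [hv.2])
          nlinarith [hv.1, hv.2]
        have := div_nonneg h1 (by positivity : (0:ℝ) ≤ v^2)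
        rw [key]
        linarith
    have hp2 : ∫⁻ v in Ioi K, ENNReal.ofReal (f1 K v) = 0 := by
      apply lint_zero measurableSet_Ioi
      intro v hv
      rw [f1, if_neg (not_le.mpr hv)]
    rw [hp1, hp2, add_zero, two_ofReal, f2, if_pos h1K]
    congr 1
    ring
  · have hz : ∫⁻ v in Ici (1:ℝ), ENNReal.ofReal (f1 K v) = 0 := by
      apply lint_zero measurableSet_Ici
      intro v hv
      rw [f1, if_neg (by intro h; exact absurd (le_trans hv h) (not_le.mpr h1K))]
    rw [hz, mul_zero, f2, if_neg (not_le.mpr h1K), ENNReal.ofReal_zero]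

lemma phi_nonneg {s v : ℝ} (hs0 : 0 < s) (hv0 : 0 < v) (hvs : v ≤ s) :
    0 ≤ 8*(2*(s/v)^2*(Real.log s - Real.log v) - 3*(s/v)^2 + 4*(s/v) - 1) := by
  have h1 : (1:ℝ) ≤ s/v := (one_le_div hv0).mpr hvs
  have h := f2aux_nonneg h1
  rw [show Real.log (s/v) = Real.log s - Real.log v from
    Real.log_div hs0.ne' hv0.ne'] at h
  linarith

lemma psidiff_nonneg {s w : ℝ} (hw : 1 ≤ w) (hws : w ≤ s) : 0 ≤ Psi s s - Psi s w := by
  rw [← intB1 hw hws]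
  apply intervalIntegral.integral_nonneg hws
  intro v hv
  exact phi_nonneg (by linarith) (by linarith [hv.1]) hv.2

lemma levelB1 {s w : ℝ} (hs : 1 ≤ s) (hw : 1 ≤ w) :
    ∫⁻ v : ℝ, (if 1 ≤ |v| then ENNReal.ofReal (f2 (s / max w (|v|))) else 0)
      = ENNReal.ofReal (J3 s w) := by
  have hs0 : (0:ℝ) < s := by linarith
  have hstep : ∫⁻ v : ℝ, (if 1 ≤ |v| then ENNReal.ofReal (f2 (s / max w (|v|))) else 0)
      = 2 * ∫⁻ v in Ici (1:ℝ), ENNReal.ofReal (f2 (s / max w v)) :=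
    lintegral_even (fun x => ENNReal.ofReal (f2 (s / max w x)))
  rw [hstep]
  rcases le_or_gt w s with hws | hws
  · rw [split3 hw hws]
    have hp1 : ∫⁻ v in Icc 1 w, ENNReal.ofReal (f2 (s / max w v))
        = ENNReal.ofReal (f2 (s/w) * (w - 1)) := by
      rw [setLIntegral_congr_fun measurableSet_Icc (fun v hv => by
          rw [max_eq_left hv.2]), setLIntegral_const, Real.volume_Icc,
        ← ENNReal.ofReal_mul (f2_nonneg _)]
    have hp2 : ∫⁻ v in Ioc w s, ENNReal.ofReal (f2 (s / max w v))
        = ENNReal.ofReal (Psi s s - Psi s w) := by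
      rw [setLIntegral_congr_fun measurableSet_Ioc (fun v hv => by
          have hv0 : (0:ℝ) < v := by linarith [hv.1]
          rw [max_eq_right hv.1.le, f2, if_pos ((one_le_div hv0).mpr hv.2),
            Real.log_div hs0.ne' hv0.ne']),
        lint_Ioc hws (contOn_phi (by linarith)) (fun v hv =>
          phi_nonneg hs0 (by linarith [hv.1]) hv.2), intB1 hw hws]
    have hp3 : ∫⁻ v in Ioi s, ENNReal.ofReal (f2 (s / max w v)) = 0 := by
      apply lint_zero measurableSet_Ioi
      intro v hv
      have hv' : s < v := hv
      have hmax : s < max w v := lt_max_iff.mpr (Or.inr hv')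
      have hmp : (0:ℝ) < max w v := lt_trans hs0 hmax
      rw [f2, if_neg (not_le.mpr ((div_lt_one hmp).mpr hmax))]
    rw [hp1, hp2, hp3, add_zero,
      ← ENNReal.ofReal_add (mul_nonneg (f2_nonneg _) (by linarith)) (psidiff_nonneg hw hws),
      two_ofReal, J3, if_pos hws]
    congr 1
    ring
  · have hz : ∫⁻ v in Ici (1:ℝ), ENNReal.ofReal (f2 (s / max w v)) = 0 := by
      apply lint_zero measurableSet_Ici
      intro v hv
      have hmax : s < max w v := lt_max_iff.mpr (Or.inl hws)
      have hmp : (0:ℝ) < max w v := lt_trans hs0 hmax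
      rw [f2, if_neg (not_le.mpr ((div_lt_one hmp).mpr hmax))]
    rw [hz, mul_zero, J3, if_neg (not_le.mpr hws), ENNReal.ofReal_zero]

lemma levelB0 {s : ℝ} (hs : 1 ≤ s) :
    ∫⁻ w : ℝ, (if 1 ≤ |w| then ENNReal.ofReal (J3 s (|w|)) else 0)
      = ENNReal.ofReal (4*(Aa s s - Aa s 1)) := by
  have hs0 : (0:ℝ) < s := by linarith
  have hstep : ∫⁻ w : ℝ, (if 1 ≤ |w| then ENNReal.ofReal (J3 s (|w|)) else 0)
      = 2 * ∫⁻ w in Ici (1:ℝ), ENNReal.ofReal (J3 s w) :=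
    lintegral_even (fun x => ENNReal.ofReal (J3 s x))
  rw [hstep, split2 hs]
  have hp1 : ∫⁻ w in Ioc 1 s, ENNReal.ofReal (J3 s w)
      = ENNReal.ofReal (2*(Aa s s - Aa s 1)) := by
    rw [setLIntegral_congr_fun measurableSet_Ioc (fun w hv => by
        have hw0 : (0:ℝ) < w := by linarith [hv.1]
        rw [J3, if_pos hv.2, f2, if_pos ((one_le_div hw0).mpr hv.2),
          Real.log_div hs0.ne' hw0.ne']),
      lint_Ioc hs ?cont ?nn]
    · rw [show (fun w : ℝ => 2*((w-1) * (8*(2*(s/w)^2*(Real.log s - Real.log w)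
            - 3*(s/w)^2 + 4*(s/w) - 1)) + (Psi s s - Psi s w)))
          = fun w : ℝ => 2*(((w-1) * (8*(2*(s/w)^2*(Real.log s - Real.log w)
            - 3*(s/w)^2 + 4*(s/w) - 1)) + (Psi s s - Psi s w))) from rfl,
        intervalIntegral.integral_const_mul, intB0 hs]
    case cont =>
      apply continuousOn_const.mul
      exact ((continuousOn_id.sub continuousOn_const).mul (contOn_phi one_pos)).add
        (continuousOn_const.sub (contOn_Psi one_pos))
    case nn =>
      intro w hv
      have hw0 : (0:ℝ) < w := by linarith [hv.1]
      have h1 := phi_nonneg hs0 hw0 hv.2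
      have h2 := psidiff_nonneg hv.1.le hv.2
      have h3 : (0:ℝ) ≤ w - 1 := by linarith [hv.1]
      nlinarith
  have hp2 : ∫⁻ w in Ioi s, ENNReal.ofReal (J3 s w) = 0 := by
    apply lint_zero measurableSet_Ioi
    intro w hv
    rw [J3, if_neg (not_le.mpr hv)]
  rw [hp1, hp2, add_zero, two_ofReal]
  congr 1
  ring

lemma Aa_eval {s : ℝ} (hs : 1 ≤ s) :
    4*(Aa s s - Aa s 1)
      = 64*s^2*(Real.log s)^2 - 320*s^2*Real.log s - 256*s*Real.log s
        + 544*s^2 - 512*s - 32 := by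
  have hs0 : s ≠ 0 := by positivity
  simp only [Aa, Real.log_one]
  field_simp
  ring

theorem vol_formula {B : ℝ} (hB : 1 ≤ B) :
    volume {x : ℝ × ℝ × ℝ × ℝ × ℝ |
        1 ≤ |x.1| ∧ 1 ≤ |x.2.1| ∧ 1 ≤ |x.2.2.1| ∧ 1 ≤ |x.2.2.2.1| ∧ 1 ≤ |x.2.2.2.2| ∧
        |x.1| * max (x.2.1 ^ 2) (x.2.2.1 ^ 2) * max (x.2.2.2.1 ^ 2) (x.2.2.2.2 ^ 2) ≤ B}
      = ENNReal.ofReal (4*(Aa (Real.sqrt B) (Real.sqrt B) - Aa (Real.sqrt B) 1)) := by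
  have hB0 : (0:ℝ) < B := by linarith
  set s : ℝ := Real.sqrt B with hsdef
  have hs : (1:ℝ) ≤ s := by
    rw [hsdef, show (1:ℝ) = Real.sqrt 1 by rw [Real.sqrt_one]]
    exact Real.sqrt_le_sqrt hB
  have hs0 : (0:ℝ) < s := by linarith
  have hsq : s^2 = B := Real.sq_sqrt hB0.le
  set S : Set (ℝ × ℝ × ℝ × ℝ × ℝ) := {x : ℝ × ℝ × ℝ × ℝ × ℝ |
        1 ≤ |x.1| ∧ 1 ≤ |x.2.1| ∧ 1 ≤ |x.2.2.1| ∧ 1 ≤ |x.2.2.2.1| ∧ 1 ≤ |x.2.2.2.2| ∧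
        |x.1| * max (x.2.1 ^ 2) (x.2.2.1 ^ 2) * max (x.2.2.2.1 ^ 2) (x.2.2.2.2 ^ 2) ≤ B}
    with hSdef
  have hS : MeasurableSet S := by
    rw [hSdef]
    simp only [Set.setOf_and]
    exact (measurableSet_le measurable_const measurable_fst.abs).inter
      ((measurableSet_le measurable_const measurable_snd.fst.abs).inter
      ((measurableSet_le measurable_const measurable_snd.snd.fst.abs).inter
      ((measurableSet_le measurable_const measurable_snd.snd.snd.fst.abs).inter
      ((measurableSet_le measurable_const measurable_snd.snd.snd.snd.abs).inter
      (measurableSet_le ((measurable_fst.abs.mul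
        ((measurable_snd.fst.pow_const 2).max (measurable_snd.snd.fst.pow_const 2))).mul
        ((measurable_snd.snd.snd.fst.pow_const 2).max
          (measurable_snd.snd.snd.snd.pow_const 2))) measurable_const)))))
  set F : ℝ × ℝ × ℝ × ℝ → ℝ≥0∞ := fun w =>
    if (1 ≤ |w.1| ∧ 1 ≤ |w.2.1| ∧ 1 ≤ |w.2.2.1| ∧ 1 ≤ |w.2.2.2|) then
      ENNReal.ofReal (2*(B / (max (w.1 ^ 2) (w.2.1 ^ 2) * max (w.2.2.1 ^ 2) (w.2.2.2 ^ 2)) - 1))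
    else 0 with hFdef
  have hFmeas : Measurable F := by
    have hcond : MeasurableSet {w : ℝ × ℝ × ℝ × ℝ |
        1 ≤ |w.1| ∧ 1 ≤ |w.2.1| ∧ 1 ≤ |w.2.2.1| ∧ 1 ≤ |w.2.2.2|} := by
      simp only [Set.setOf_and]
      exact (measurableSet_le measurable_const measurable_fst.abs).inter
        ((measurableSet_le measurable_const measurable_snd.fst.abs).inter
        ((measurableSet_le measurable_const measurable_snd.snd.fst.abs).inter
        (measurableSet_le measurable_const measurable_snd.snd.snd.abs)))
    apply Measurable.ite hcond _ measurable_const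
    apply ENNReal.measurable_ofReal.comp
    apply Measurable.const_mul
    apply Measurable.sub _ measurable_const
    exact (measurable_const.div
      (((measurable_fst.pow_const 2).max (measurable_snd.fst.pow_const 2)).mul
        ((measurable_snd.snd.fst.pow_const 2).max (measurable_snd.snd.snd.pow_const 2))))
  have step1 : volume S = ∫⁻ w : ℝ × ℝ × ℝ × ℝ, F w := by
    rw [Measure.volume_eq_prod, Measure.prod_apply_symm hS]
    apply lintegral_congr
    intro w
    by_cases hc : (1 ≤ |w.1| ∧ 1 ≤ |w.2.1| ∧ 1 ≤ |w.2.2.1| ∧ 1 ≤ |w.2.2.2|)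
    · have h1 : (1:ℝ) ≤ w.1^2 := by nlinarith [hc.1, sq_abs w.1, abs_nonneg w.1]
      have h3 : (1:ℝ) ≤ w.2.2.1^2 := by nlinarith [hc.2.2.1, sq_abs w.2.2.1, abs_nonneg w.2.2.1]
      have hP : (0:ℝ) < max (w.1 ^ 2) (w.2.1 ^ 2) * max (w.2.2.1 ^ 2) (w.2.2.2 ^ 2) := by
        have := le_max_left (w.1^2) (w.2.1^2)
        have := le_max_left (w.2.2.1^2) (w.2.2.2^2)
        nlinarith
      have hpre : (fun x => (x, w)) ⁻¹' S
          = {a : ℝ | 1 ≤ |a| ∧ |a| ≤ B / (max (w.1 ^ 2) (w.2.1 ^ 2) * max (w.2.2.1 ^ 2) (w.2.2.2 ^ 2))} := by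
        ext a
        simp only [hSdef, mem_preimage, mem_setOf_eq]
        constructor
        · rintro ⟨ha, _, _, _, _, h6⟩
          exact ⟨ha, (le_div_iff₀ hP).mpr (by rw [← mul_assoc]; exact h6)⟩
        · rintro ⟨ha, h2⟩
          exact ⟨ha, hc.1, hc.2.1, hc.2.2.1, hc.2.2.2,
            by rw [mul_assoc]; exact (le_div_iff₀ hP).mp h2⟩
      rw [hpre, vol_abs]
      simp only [hFdef]
      rw [if_pos hc]
    · have hpre : (fun x => (x, w)) ⁻¹' S = ∅ := by
        rw [eq_empty_iff_forall_notMem]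
        rintro a ⟨_, h2, h3, h4, h5, _⟩
        exact hc ⟨h2, h3, h4, h5⟩
      rw [hpre, measure_empty]
      simp only [hFdef]
      rw [if_neg hc]
  rw [step1]
  rw [Measure.volume_eq_prod, lintegral_prod _ hFmeas.aemeasurable]
  have step2 : ∀ b0 : ℝ, ∫⁻ y : ℝ × ℝ × ℝ, F (b0, y)
      = if 1 ≤ |b0| then ENNReal.ofReal (J3 s (|b0|)) else 0 := by
    intro b0
    rw [Measure.volume_eq_prod, lintegral_prod (fun y => F (b0, y))
      (Measurable.aemeasurable (by exact hFmeas.comp measurable_prodMk_left))]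
    have step3 : ∀ b1 : ℝ, ∫⁻ z : ℝ × ℝ, F (b0, b1, z)
        = if 1 ≤ |b0| ∧ 1 ≤ |b1| then
            ENNReal.ofReal (f2 (s / max (|b0|) (|b1|))) else 0 := by
      intro b1
      rw [Measure.volume_eq_prod, lintegral_prod (fun z => F (b0, b1, z))
        (Measurable.aemeasurable
          (by exact (hFmeas.comp measurable_prodMk_left).comp measurable_prodMk_left))]
      have hmb : max (b0 ^ 2) (b1 ^ 2) = (max (|b0|) (|b1|))^2 := max_sq b0 b1
      have step4 : ∀ c0 : ℝ, ∫⁻ c1 : ℝ, F (b0, b1, c0, c1)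
          = if 1 ≤ |b0| ∧ 1 ≤ |b1| ∧ 1 ≤ |c0| then
              ENNReal.ofReal (f1 (s / max (|b0|) (|b1|)) (|c0|)) else 0 := by
        intro c0
        by_cases hc : 1 ≤ |b0| ∧ 1 ≤ |b1| ∧ 1 ≤ |c0|
        · have hmb0 : (0:ℝ) < max (|b0|) (|b1|) :=
            lt_of_lt_of_le one_pos (le_trans hc.1 (le_max_left _ _))
          have hK : (0:ℝ) < s / max (|b0|) (|b1|) := div_pos hs0 hmb0
          have heval : ∀ c1 : ℝ, F (b0, b1, c0, c1)
              = if 1 ≤ |c1| then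
                  ENNReal.ofReal
                    (2*((s / max (|b0|) (|b1|))^2/(max (|c0|) (|c1|))^2 - 1)) else 0 := by
            intro c1
            simp only [hFdef]
            by_cases h1 : 1 ≤ |c1|
            · rw [if_pos ⟨hc.1, hc.2.1, hc.2.2, h1⟩, if_pos h1]
              congr 2
              rw [hmb, max_sq c0 c1, div_pow, hsq, div_div]
            · rw [if_neg (by tauto), if_neg h1]
          rw [lintegral_congr heval, if_pos hc]
          exact levelC1 hc.2.2 hK
        · have heval : ∀ c1 : ℝ, F (b0, b1, c0, c1) = 0 := by
            intro c1
            simp only [hFdef]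
            rw [if_neg (by tauto)]
          rw [lintegral_congr heval, if_neg hc]
          simp
      rw [lintegral_congr step4]
      by_cases hc : 1 ≤ |b0| ∧ 1 ≤ |b1|
      · have hmb0 : (0:ℝ) < max (|b0|) (|b1|) :=
          lt_of_lt_of_le one_pos (le_trans hc.1 (le_max_left _ _))
        have hK : (0:ℝ) < s / max (|b0|) (|b1|) := div_pos hs0 hmb0
        have heval : ∀ c0 : ℝ, (if 1 ≤ |b0| ∧ 1 ≤ |b1| ∧ 1 ≤ |c0| then
              ENNReal.ofReal (f1 (s / max (|b0|) (|b1|)) (|c0|)) else 0)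
            = if 1 ≤ |c0| then ENNReal.ofReal (f1 (s / max (|b0|) (|b1|)) (|c0|)) else 0 := by
          intro c0
          by_cases h1 : 1 ≤ |c0|
          · rw [if_pos ⟨hc.1, hc.2, h1⟩, if_pos h1]
          · rw [if_neg (by tauto), if_neg h1]
        rw [lintegral_congr heval, if_pos hc]
        exact levelC0 hK
      · have heval : ∀ c0 : ℝ, (if 1 ≤ |b0| ∧ 1 ≤ |b1| ∧ 1 ≤ |c0| then
              ENNReal.ofReal (f1 (s / max (|b0|) (|b1|)) (|c0|)) else 0) = 0 := by
          intro c0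
          rw [if_neg (by tauto)]
        rw [lintegral_congr heval, if_neg hc]
        simp
    rw [lintegral_congr step3]
    by_cases hc : 1 ≤ |b0|
    · have heval : ∀ b1 : ℝ, (if 1 ≤ |b0| ∧ 1 ≤ |b1| then
            ENNReal.ofReal (f2 (s / max (|b0|) (|b1|))) else 0)
          = if 1 ≤ |b1| then ENNReal.ofReal (f2 (s / max (|b0|) (|b1|))) else 0 := by
        intro b1
        by_cases h1 : 1 ≤ |b1|
        · rw [if_pos ⟨hc, h1⟩, if_pos h1]
        · rw [if_neg (by tauto), if_neg h1]
      rw [lintegral_congr heval, if_pos hc]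
      exact levelB1 hs hc
    · have heval : ∀ b1 : ℝ, (if 1 ≤ |b0| ∧ 1 ≤ |b1| then
            ENNReal.ofReal (f2 (s / max (|b0|) (|b1|))) else 0) = 0 := by
        intro b1
        rw [if_neg (by tauto)]
      rw [lintegral_congr heval, if_neg hc]
      simp
  rw [lintegral_congr step2]
  exact levelB0 hs

end Stmt6

/-- Let `V(B)` be one quarter of the Lebesgue volume of the region
`{(a₁,b₀,b₁,c₀,c₁) ∈ ℝ⁵ : |a₁|,|b₀|,|b₁|,|c₀|,|c₁| ≥ 1,
|a₁|·max(b₀²,b₁²)·max(c₀²,c₁²) ≤ B}`.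
Then `V(B) = 4·B·(log B)² + O(B·log B)` as `B → ∞`. -/
theorem stmt_6 :
    (fun B : ℝ =>
        (volume {x : ℝ × ℝ × ℝ × ℝ × ℝ |
            1 ≤ |x.1| ∧ 1 ≤ |x.2.1| ∧ 1 ≤ |x.2.2.1| ∧ 1 ≤ |x.2.2.2.1| ∧ 1 ≤ |x.2.2.2.2| ∧
            |x.1| * max (x.2.1 ^ 2) (x.2.2.1 ^ 2) * max (x.2.2.2.1 ^ 2) (x.2.2.2.2 ^ 2)
              ≤ B}).toReal / 4
          - 4 * B * (Real.log B) ^ 2)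
      =O[atTop] fun B : ℝ => B * Real.log B := by
  rw [isBigO_iff]
  refine ⟨344, ?_⟩
  filter_upwards [eventually_ge_atTop (Real.exp 60)] with B hBe
  have hB1 : (1:ℝ) ≤ B := le_trans (Real.one_le_exp (by norm_num)) hBe
  have hB0 : (0:ℝ) < B := by linarith
  have hL60 : (60:ℝ) ≤ Real.log B := (Real.le_log_iff_exp_le hB0).mpr hBe
  have hL0 : (0:ℝ) ≤ Real.log B := by linarith
  have hr1 : (1:ℝ) ≤ Real.sqrt B := by
    rw [show (1:ℝ) = Real.sqrt 1 by rw [Real.sqrt_one]]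
    exact Real.sqrt_le_sqrt hB1
  have hr0 : (0:ℝ) ≤ Real.sqrt B := by linarith
  have hr2 : (Real.sqrt B)^2 = B := Real.sq_sqrt hB0.le
  have hrB : Real.sqrt B ≤ B := by
    have h := Real.sqrt_le_sqrt (by nlinarith : B ≤ B^2)
    rwa [Real.sqrt_sq hB0.le] at h
  have hlogr : Real.log (Real.sqrt B) = Real.log B / 2 := Real.log_sqrt hB0.le
  have hval : 4*(Stmt6.Aa (Real.sqrt B) (Real.sqrt B) - Stmt6.Aa (Real.sqrt B) 1)
      = 16*B*(Real.log B)^2 - 160*B*Real.log B - 128*(Real.sqrt B*Real.log B)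
        + 544*B - 512*Real.sqrt B - 32 := by
    rw [Stmt6.Aa_eval hr1, hlogr, hr2]; ring
  have hrL : Real.sqrt B * Real.log B ≤ B * Real.log B :=
    mul_le_mul_of_nonneg_right hrB hL0
  have hBL0 : (0:ℝ) ≤ B * Real.log B := mul_nonneg hB0.le hL0
  have hBL : B ≤ B * Real.log B := by nlinarith
  have hnn : 0 ≤ 4*(Stmt6.Aa (Real.sqrt B) (Real.sqrt B) - Stmt6.Aa (Real.sqrt B) 1) := by
    rw [hval]
    nlinarith [mul_nonneg (mul_nonneg hB0.le hL0) (by linarith : (0:ℝ) ≤ Real.log B - 60),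
      mul_nonneg hr0 hL0]
  rw [Stmt6.vol_formula hB1, ENNReal.toReal_ofReal hnn, hval, Real.norm_eq_abs,
    Real.norm_eq_abs, abs_of_nonneg hBL0]
  have key : (16*B*(Real.log B)^2 - 160*B*Real.log B - 128*(Real.sqrt B*Real.log B)
        + 544*B - 512*Real.sqrt B - 32)/4 - 4*B*(Real.log B)^2
      = -(40*(B*Real.log B)) - 32*(Real.sqrt B*Real.log B) + 136*B - 128*Real.sqrt B - 8 := by
    ring
  rw [key, abs_le]
  constructor
  · nlinarith [mul_nonneg hr0 hL0]
  · nlinarith [mul_nonneg hr0 hL0]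
end
end
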